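/- Let T : [0,1) → [0,1) be a right-continuous interval exchange transformation with N−1 discontinuities (N > 1), and let Δ = [a,b) ⊆ [0,1). Then the induced first return map T_Δ : Δ → Δ is again a right-continuous interval exchange transformation, and it has at most N+1 discontinuities. -/

import Mathlib

open Set Topology Filter ENNReal

section IETHelpers


/-- A right-continuous interval exchange transformation of `[c, d)`. -/
def IsIETOn (T : ℝ → ℝ) (c d : ℝ) : Prop :=
  ∃ (N : ℕ) (p : ℕ → ℝ) (σ : ℕ → ℝ),
    1 ≤ N ∧ p 0 = c ∧ p N = d ∧ (∀ i < N, p i < p (i + 1)) ∧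
    (∀ i < N, ∀ x ∈ Set.Ico (p i) (p (i + 1)), T x = x + σ i) ∧
    Set.BijOn T (Set.Ico c d) (Set.Ico c d)

/-- A right-continuous IET of `[0, 1)`. -/
def IsIET (T : ℝ → ℝ) : Prop := IsIETOn T 0 1

/-- The set of discontinuities of `T` viewed as a map of `[c, d)`. -/
def Discont (T : ℝ → ℝ) (c d : ℝ) : Set ℝ :=
  {x | x ∈ Set.Ico c d ∧ ¬ ContinuousWithinAt T (Set.Ico c d) x}

/-- The first return time of `x` to `Δ` under `T`: `min {n ≥ 1 | T^[n] x ∈ Δ}`. -/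
noncomputable def retTime (T : ℝ → ℝ) (Δ : Set ℝ) (x : ℝ) : ℕ :=
  sInf {n : ℕ | 1 ≤ n ∧ T^[n] x ∈ Δ}

/-- The first return (induced) map of `T` on `Δ`. -/
noncomputable def retMap (T : ℝ → ℝ) (Δ : Set ℝ) (x : ℝ) : ℝ :=
  T^[retTime T Δ x] x



lemma chain_lt (p : ℕ → ℝ) (M : ℕ) (h : ∀ i < M, p i < p (i+1)) :
    ∀ j k, j < k → k ≤ M → p j < p k := by
  intro j k hjk hkM
  induction k with
  | zero => omega
  | succ k ih =>
    rcases Nat.lt_succ_iff_lt_or_eq.1 hjk with h' | h'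
    · exact (ih h' (by omega)).trans (h k (by omega))
    · subst h'; exact h j (by omega)

lemma chain_le (p : ℕ → ℝ) (M : ℕ) (h : ∀ i < M, p i < p (i+1)) :
    ∀ j k, j ≤ k → k ≤ M → p j ≤ p k := by
  intro j k hjk hkM
  rcases eq_or_lt_of_le hjk with h' | h'
  · rw [h']
  · exact le_of_lt (chain_lt p M h j k h' hkM)

lemma exists_piece (p : ℕ → ℝ) :
    ∀ M : ℕ, (∀ i < M, p i < p (i+1)) → ∀ x, p 0 ≤ x → x < p M →
      ∃ i, i < M ∧ p i ≤ x ∧ x < p (i+1) := by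
  intro M
  induction M with
  | zero => intro _ x h0 h1; exact absurd (lt_of_le_of_lt h0 h1) (lt_irrefl _)
  | succ M ih =>
    intro h x h0 h1
    by_cases hx : x < p M
    · obtain ⟨i, hi, h2, h3⟩ := ih (fun i hi => h i (by omega)) x h0 hx
      exact ⟨i, by omega, h2, h3⟩
    · exact ⟨M, by omega, le_of_not_gt hx, h1⟩

lemma injOn_iter {T : ℝ → ℝ} {s : Set ℝ} (hm : MapsTo T s s) (hi : InjOn T s) :
    ∀ n, InjOn (T^[n]) s := by
  intro n
  induction n with
  | zero => simpa using injOn_id s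
  | succ n ih =>
    intro x hx y hy hxy
    rw [Function.iterate_succ_apply', Function.iterate_succ_apply'] at hxy
    exact ih hx hy (hi (hm.iterate n hx) (hm.iterate n hy) hxy)

lemma transOn (T : ℝ → ℝ) (M : ℕ) (q σq : ℕ → ℝ)
    (hq0 : q 0 = 0) (hqM : q M = 1)
    (hmono : ∀ i < M, q i < q (i+1))
    (hpiece : ∀ i < M, ∀ x ∈ Ico (q i) (q (i+1)), T x = x + σq i)
    (u v : ℝ) (hu : 0 ≤ u) (hv : v ≤ 1)
    (hnd : ∀ d ∈ Ioo u v, d ∉ Discont T 0 1) :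
    ∀ x ∈ Ico u v, T x = x + (T u - u) := by
  intro x hx
  have huv : u < v := lt_of_le_of_lt hx.1 hx.2
  have hu1 : u < 1 := lt_of_lt_of_le huv hv
  obtain ⟨i₀, hi₀M, hi₀l, hi₀r⟩ := exists_piece q M hmono u (by rw [hq0]; exact hu)
    (by rw [hqM]; exact hu1)
  have hTu : T u = u + σq i₀ := hpiece i₀ hi₀M u ⟨hi₀l, hi₀r⟩
  obtain ⟨i, hiM, hil, hir⟩ := exists_piece q M hmono x (by rw [hq0]; exact hu.trans hx.1)
    (by rw [hqM]; exact lt_of_lt_of_le hx.2 hv)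
  have hTx : T x = x + σq i := hpiece i hiM x ⟨hil, hir⟩
  have hi₀i : i₀ ≤ i := by
    by_contra hc
    push_neg at hc
    have h2 : q (i+1) ≤ q i₀ := chain_le q M hmono _ _ (by omega) (le_of_lt hi₀M)
    have := hx.1
    linarith
  have key : ∀ j, i₀ ≤ j → j < M → q j < v → σq j = σq i₀ := by
    intro j hj
    induction j, hj using Nat.le_induction with
    | base => intro _ _; rfl
    | succ j hj ih =>
      intro hjM hqv
      have hjM' : j < M := by omega
      have hqjv : q j < v := lt_trans (hmono j hjM') hqv
      have ihj := ih hjM' hqjv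
      have hwu : u < q (j+1) := by
        have h2 : q (i₀+1) ≤ q (j+1) := chain_le q M hmono _ _ (by omega) (le_of_lt hjM)
        linarith
      have hw01 : q (j+1) ∈ Ico (0:ℝ) 1 := ⟨le_trans hu (le_of_lt hwu), lt_of_lt_of_le hqv hv⟩
      have hcont : ContinuousWithinAt T (Ico (0:ℝ) 1) (q (j+1)) := by
        by_contra hc
        exact hnd _ ⟨hwu, hqv⟩ ⟨hw01, hc⟩
      set w := q (j+1) with hwdef
      have hql0 : (0:ℝ) ≤ q j := by
        rw [← hq0]
        exact chain_le q M hmono 0 j (by omega) (by omega)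
      have hqjw : q j < w := hmono j hjM'
      have hsubI : Ioo (q j) w ⊆ Ico (0:ℝ) 1 :=
        fun y hy => ⟨le_trans hql0 (le_of_lt hy.1), lt_trans hy.2 hw01.2⟩
      have hne : (𝓝[Ioo (q j) w] w).NeBot := by
        rw [nhdsWithin_Ioo_eq_nhdsLT hqjw]
        infer_instance
      have h1 : Filter.Tendsto T (𝓝[Ioo (q j) w] w) (𝓝 (T w)) := hcont.mono hsubI
      have h2 : Filter.Tendsto (fun y => y + σq j) (𝓝[Ioo (q j) w] w) (𝓝 (w + σq j)) :=
        ((continuous_id.add continuous_const).tendsto w).mono_left nhdsWithin_le_nhds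
      have h3 : Filter.Tendsto T (𝓝[Ioo (q j) w] w) (𝓝 (w + σq j)) := by
        apply h2.congr'
        filter_upwards [self_mem_nhdsWithin] with y hy
        exact (hpiece j hjM' y ⟨le_of_lt hy.1, hy.2⟩).symm
      have hTw : T w = w + σq (j+1) := hpiece (j+1) hjM w ⟨le_refl w, hmono (j+1) hjM⟩
      have huniq := tendsto_nhds_unique h3 h1
      rw [hTw] at huniq
      have : σq j = σq (j+1) := by linarith
      rw [← this]; exact ihj
  have := key i hi₀i hiM (lt_of_le_of_lt hil hx.2)
  rw [hTx, hTu, this]; ring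

lemma component
    (T : ℝ → ℝ) (a b : ℝ) (C₀ : Set ℝ)
    (hsub : Ico a b ⊆ Ico (0:ℝ) 1)
    (hmaps : MapsTo T (Ico (0:ℝ) 1) (Ico (0:ℝ) 1))
    (hinj : InjOn T (Ico (0:ℝ) 1))
    (htrans : ∀ u v : ℝ, 0 ≤ u → v ≤ 1 → (∀ d ∈ Ioo u v, d ∉ Discont T 0 1) →
        ∀ x ∈ Ico u v, T x = x + (T u - u))
    (hX : ∀ d ∈ Discont T 0 1, d ∈ Ioo a b → d ∈ C₀)
    (hB : ∀ s ξ, (s ∈ Discont T 0 1 ∧ s ∉ Ico a b) ∨ s = a ∨ s = b →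
        ξ ∈ Ico a b → ∀ k, 1 ≤ k → T^[k] ξ = s →
        (∀ j, 1 ≤ j → j < k → T^[j] ξ ∉ Ico a b) → ξ ∈ C₀)
    (c c' : ℝ) (hac : a ≤ c) (hcc : c < c') (hcb : c' ≤ b)
    (hfree : ∀ y ∈ C₀, y ∉ Ioo c c') :
    ∃ n, 1 ≤ n ∧ ∀ x ∈ Ico c c',
      (∀ j, 1 ≤ j → j < n → T^[j] x ∉ Ico a b) ∧
      T^[n] x = x + (T^[n] c - c) ∧ T^[n] x ∈ Ico a b := by
  have hccΔ : Ico c c' ⊆ Ico a b := fun x hx => ⟨le_trans hac hx.1, lt_of_lt_of_le hx.2 hcb⟩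
  have hcmem : c ∈ Ico c c' := ⟨le_refl c, hcc⟩
  have hIter : ∀ k, ∀ x ∈ Ico c c', T^[k] x ∈ Ico (0:ℝ) 1 :=
    fun k x hx => (hmaps.iterate k) (hsub (hccΔ hx))
  -- key step
  have step : ∀ k, (∀ x ∈ Ico c c', T^[k] x = x + (T^[k] c - c)) →
      (∀ j, 1 ≤ j → j ≤ k → ∀ x ∈ Ico c c', T^[j] x ∉ Ico a b) →
      (∀ x ∈ Ico c c', T^[k+1] x = x + (T^[k+1] c - c)) ∧
      ((∀ x ∈ Ico c c', T^[k+1] x ∉ Ico a b) ∨ (∀ x ∈ Ico c c', T^[k+1] x ∈ Ico a b)) := by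
    intro k hG hA
    set w := T^[k] c with hwdef
    have hwI : w ∈ Ico (0:ℝ) 1 := hIter k c hcmem
    have himg : ∀ x ∈ Ico c c', T^[k] x ∈ Ico w (w + (c' - c)) := by
      intro x hx
      rw [hG x hx]
      exact ⟨by linarith [hx.1], by linarith [hx.2]⟩
    -- no essential discontinuity inside the image interval
    have hnd : ∀ d ∈ Ioo w (w + (c' - c)), d ∉ Discont T 0 1 := by
      intro d hd hdD
      obtain ⟨ξ, hξdef⟩ : ∃ ξ : ℝ, ξ = c + (d - w) := ⟨_, rfl⟩
      have hξmem : ξ ∈ Ioo c c' := ⟨by rw [hξdef]; linarith [hd.1], by rw [hξdef]; linarith [hd.2]⟩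
      have hξmem' : ξ ∈ Ico c c' := ⟨le_of_lt hξmem.1, hξmem.2⟩
      have hTkξ : T^[k] ξ = d := by rw [hG ξ hξmem', hξdef]; ring
      rcases Nat.eq_zero_or_pos k with hk0 | hk1
      · subst hk0
        simp only [Function.iterate_zero_apply] at hTkξ
        subst hTkξ
        exact hfree ξ (hX ξ hdD ⟨lt_of_le_of_lt hac hξmem.1, lt_of_lt_of_le hξmem.2 hcb⟩) hξmem
      · have hdΔ : d ∉ Ico a b := by
          have := hA k hk1 le_rfl ξ hξmem'
          rwa [hTkξ] at this
        have hξC : ξ ∈ C₀ := hB d ξ (Or.inl ⟨hdD, hdΔ⟩) (hccΔ hξmem') k hk1 hTkξ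
          (fun j hj1 hjk => hA j hj1 (le_of_lt hjk) ξ hξmem')
        exact hfree ξ hξC hξmem
    -- image interval inside [0,1]
    have hwv1 : w + (c' - c) ≤ 1 := by
      by_contra hcon
      push_neg at hcon
      set x := max c (1 - w + c) with hxdef
      have hxmem : x ∈ Ico c c' := ⟨le_max_left _ _, by
        apply max_lt hcc
        linarith⟩
      have h1 := (hIter k x hxmem).2
      rw [hG x hxmem] at h1
      have hx2 : 1 - w + c ≤ x := le_max_right _ _
      linarith
    have htr := htrans w (w + (c' - c)) hwI.1 hwv1 hnd
    have hG' : ∀ x ∈ Ico c c', T^[k+1] x = x + (T^[k+1] c - c) := by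
      intro x hx
      rw [Function.iterate_succ_apply', Function.iterate_succ_apply']
      rw [htr (T^[k] x) (himg x hx), hG x hx, ← hwdef]
      ring
    refine ⟨hG', ?_⟩
    set w' := T^[k+1] c with hw'def
    have himg' : ∀ x ∈ Ico c c', T^[k+1] x = x + (w' - c) := hG'
    by_cases hca : w' + (c' - c) ≤ a
    · left
      intro x hx hmem
      rw [himg' x hx] at hmem
      have := hmem.1
      linarith [hx.2]
    by_cases hcb' : b ≤ w'
    · left
      intro x hx hmem
      rw [himg' x hx] at hmem
      have := hmem.2
      linarith [hx.1]
    push_neg at hca hcb'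
    by_cases hgood : a ≤ w' ∧ w' + (c' - c) ≤ b
    · right
      intro x hx
      rw [himg' x hx]
      exact ⟨by linarith [hx.1, hgood.1], by linarith [hx.2, hgood.2]⟩
    · exfalso
      push_neg at hgood
      by_cases hwa : w' < a
      · -- a is crossed
        obtain ⟨ξ, hξdef⟩ : ∃ ξ : ℝ, ξ = c + (a - w') := ⟨_, rfl⟩
        have hξmem : ξ ∈ Ioo c c' := ⟨by rw [hξdef]; linarith, by rw [hξdef]; linarith⟩
        have hξmem' : ξ ∈ Ico c c' := ⟨le_of_lt hξmem.1, hξmem.2⟩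
        have hTξ : T^[k+1] ξ = a := by rw [himg' ξ hξmem', hξdef]; ring
        exact hfree ξ (hB a ξ (Or.inr (Or.inl rfl)) (hccΔ hξmem') (k+1) (by omega) hTξ
          (fun j hj1 hjk => hA j hj1 (by omega) ξ hξmem')) hξmem
      · push_neg at hwa
        have hbc : w' + (c' - c) > b := hgood hwa
        obtain ⟨ξ, hξdef⟩ : ∃ ξ : ℝ, ξ = c + (b - w') := ⟨_, rfl⟩
        have hξmem : ξ ∈ Ioo c c' := ⟨by rw [hξdef]; linarith, by rw [hξdef]; linarith⟩
        have hξmem' : ξ ∈ Ico c c' := ⟨le_of_lt hξmem.1, hξmem.2⟩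
        have hTξ : T^[k+1] ξ = b := by rw [himg' ξ hξmem', hξdef]; ring
        exact hfree ξ (hB b ξ (Or.inr (Or.inr rfl)) (hccΔ hξmem') (k+1) (by omega) hTξ
          (fun j hj1 hjk => hA j hj1 (by omega) ξ hξmem')) hξmem
  -- combined induction
  have GA : ∀ k, (∀ j, 1 ≤ j → j ≤ k → T^[j] c ∉ Ico a b) →
      (∀ x ∈ Ico c c', T^[k] x = x + (T^[k] c - c)) ∧
      (∀ j, 1 ≤ j → j ≤ k → ∀ x ∈ Ico c c', T^[j] x ∉ Ico a b) := by
    intro k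
    induction k with
    | zero =>
      intro _
      exact ⟨fun x hx => by simp, fun j h1 h2 => by omega⟩
    | succ k ih =>
      intro hc
      obtain ⟨ihG, ihA⟩ := ih (fun j h1 h2 => hc j h1 (by omega))
      obtain ⟨hG', hdi⟩ := step k ihG ihA
      have havoid : ∀ x ∈ Ico c c', T^[k+1] x ∉ Ico a b := by
        rcases hdi with h | h
        · exact h
        · exact absurd (h c hcmem) (hc (k+1) (by omega) le_rfl)
      refine ⟨hG', fun j h1 h2 x hx => ?_⟩
      by_cases h2' : j ≤ k
      · exact ihA j h1 h2' x hx
      · have : j = k + 1 := by omega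
        subst this
        exact havoid x hx
  -- the return set is nonempty
  have hSne : {n : ℕ | 1 ≤ n ∧ T^[n] c ∈ Ico a b}.Nonempty := by
    by_contra hnot
    rw [Set.not_nonempty_iff_eq_empty] at hnot
    have hnever : ∀ k, 1 ≤ k → T^[k] c ∉ Ico a b := by
      intro k h1 h2
      have : k ∈ {n : ℕ | 1 ≤ n ∧ T^[n] c ∈ Ico a b} := ⟨h1, h2⟩
      rw [hnot] at this
      exact this
    have hall : ∀ k, (∀ x ∈ Ico c c', T^[k] x = x + (T^[k] c - c)) ∧
        (∀ j, 1 ≤ j → j ≤ k → ∀ x ∈ Ico c c', T^[j] x ∉ Ico a b) :=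
      fun k => GA k (fun j h1 _ => hnever j h1)
    -- disjoint intervals J k
    set L := c' - c with hLdef
    have hL : 0 < L := by rw [hLdef]; linarith
    set J : ℕ → Set ℝ := fun k => Ico (T^[k] c) (T^[k] c + L) with hJdef
    have hJim : ∀ k, ∀ z ∈ J k, ∃ x ∈ Ico c c', T^[k] x = z := by
      intro k z hz
      have hzz : z - (T^[k] c - c) ∈ Ico c c' :=
        ⟨by linarith [hz.1], by linarith [hz.2, hLdef.ge]⟩
      refine ⟨z - (T^[k] c - c), hzz, ?_⟩
      rw [(hall k).1 _ hzz]
      ring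
    have hJsub : ∀ k, J k ⊆ Ico (0:ℝ) 1 := by
      intro k z hz
      obtain ⟨x, hx, hxz⟩ := hJim k z hz
      rw [← hxz]
      exact hIter k x hx
    have hdisj : ∀ i j : ℕ, i < j → Disjoint (J i) (J j) := by
      intro i j hij
      rw [Set.disjoint_left]
      intro z hzi hzj
      obtain ⟨x, hx, hxz⟩ := hJim i z hzi
      obtain ⟨y, hy, hyz⟩ := hJim j z hzj
      have heq : T^[i] x = T^[i] (T^[j-i] y) := by
        rw [hxz, ← Function.iterate_add_apply]
        have : i + (j - i) = j := by omega
        rw [this, hyz]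
      have hyI : T^[j-i] y ∈ Ico (0:ℝ) 1 := (hmaps.iterate (j-i)) (hsub (hccΔ hy))
      have hxy : x = T^[j-i] y := injOn_iter hmaps hinj i (hsub (hccΔ hx)) hyI heq
      have : T^[j-i] y ∉ Ico a b := (hall (j-i)).2 (j-i) (by omega) le_rfl y hy
      rw [← hxy] at this
      exact this (hccΔ hx)
    -- measure contradiction
    obtain ⟨m, hm⟩ := exists_nat_gt (1 / L)
    have hm1 : 1 < (m : ℝ) * L := by
      rw [div_lt_iff₀ hL] at hm
      linarith
    have hdisj' : (↑(Finset.range m) : Set ℕ).PairwiseDisjoint J := by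
      intro i _ j _ hij
      rcases lt_or_gt_of_ne hij with h | h
      · exact hdisj i j h
      · exact (hdisj j i h).symm
    have hvol : ∑ k ∈ Finset.range m, MeasureTheory.volume (J k) =
        MeasureTheory.volume (⋃ k ∈ Finset.range m, J k) :=
      (MeasureTheory.measure_biUnion_finset hdisj' (fun _ _ => measurableSet_Ico)).symm
    have hJv : ∀ k, MeasureTheory.volume (J k) = ENNReal.ofReal L := by
      intro k
      rw [hJdef]
      simp [Real.volume_Ico]
    have hle : MeasureTheory.volume (⋃ k ∈ Finset.range m, J k) ≤
        MeasureTheory.volume (Ico (0:ℝ) 1) := by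
      apply MeasureTheory.measure_mono
      exact Set.iUnion₂_subset (fun k _ => hJsub k)
    rw [← hvol] at hle
    simp only [hJv, Finset.sum_const, Finset.card_range, nsmul_eq_mul] at hle
    rw [Real.volume_Ico] at hle
    have : (m : ℝ≥0∞) * ENNReal.ofReal L = ENNReal.ofReal (m * L) := by
      rw [ENNReal.ofReal_mul (by positivity)]
      simp
    rw [this] at hle
    rw [sub_zero] at hle
    have := (ENNReal.ofReal_le_ofReal_iff (by norm_num)).1 hle
    linarith
  -- conclude
  set n := sInf {n : ℕ | 1 ≤ n ∧ T^[n] c ∈ Ico a b} with hndef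
  have hnmem := Nat.sInf_mem hSne
  have hn1 : 1 ≤ n := hnmem.1
  have hmin : ∀ j, j < n → ¬(1 ≤ j ∧ T^[j] c ∈ Ico a b) := fun j hj => Nat.notMem_of_lt_sInf hj
  obtain ⟨hGn1, hAn1⟩ := GA (n-1) (fun j h1 h2 => fun hmem => hmin j (by omega) ⟨h1, hmem⟩)
  obtain ⟨hGn, hdi⟩ := step (n-1) hGn1 hAn1
  have hsucc : n - 1 + 1 = n := by omega
  rw [hsucc] at hGn hdi
  have hin : ∀ x ∈ Ico c c', T^[n] x ∈ Ico a b := by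
    rcases hdi with h | h
    · exact absurd hnmem.2 (h c hcmem)
    · exact h
  exact ⟨n, hn1, fun x hx =>
    ⟨fun j hj1 hjn => hAn1 j hj1 (by omega) x hx, hGn x hx, hin x hx⟩⟩

end IETHelpers

/-- If `T` is a right-continuous IET of `[0,1)` with `N - 1` discontinuities (`N > 1`)
and `Δ = [a,b) ⊆ [0,1)`, then the induced first return map `T_Δ` is again a
right-continuous IET of `[a,b)`, with at most `N + 1` discontinuities. -/
theorem induced_map_is_IET (N : ℕ) (hN : 1 < N) (T : ℝ → ℝ) (hT : IsIET T)
    (hfin : (Discont T 0 1).Finite) (hcard : (Discont T 0 1).ncard = N - 1)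
    (a b : ℝ) (hab : a < b) (hsub : Set.Ico a b ⊆ Set.Ico (0 : ℝ) 1) :
    IsIETOn (retMap T (Set.Ico a b)) a b ∧
    (Discont (retMap T (Set.Ico a b)) a b).Finite ∧
    (Discont (retMap T (Set.Ico a b)) a b).ncard ≤ N + 1 := by
  classical
  obtain ⟨M, q, σq, hM1, hq0, hqM, hqmono, hqpiece, hqbij⟩ := hT
  have hmaps : MapsTo T (Ico (0:ℝ) 1) (Ico (0:ℝ) 1) := hqbij.mapsTo
  have hinj : InjOn T (Ico (0:ℝ) 1) := hqbij.injOn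
  have htrans := transOn T M q σq hq0 hqM hqmono hqpiece
  set D := Discont T 0 1 with hDdef
  -- backward first-entrance sets
  set B : ℝ → Set ℝ := fun s =>
    {ξ | ξ ∈ Set.Ico a b ∧ ∃ k, 1 ≤ k ∧ T^[k] ξ = s ∧
      ∀ j, 1 ≤ j → j < k → T^[j] ξ ∉ Set.Ico a b} with hBdef
  have hBsub : ∀ s, (B s).Subsingleton := by
    have key : ∀ (s : ℝ) k k' (ξ ξ' : ℝ), ξ ∈ Set.Ico a b → ξ' ∈ Set.Ico a b →
        1 ≤ k → 1 ≤ k' → k ≤ k' → T^[k] ξ = s → T^[k'] ξ' = s →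
        (∀ j, 1 ≤ j → j < k' → T^[j] ξ' ∉ Set.Ico a b) → ξ = ξ' := by
      intro s k k' ξ ξ' hξ hξ' hk hk' hkk hks hk's hav
      have heq : T^[k] ξ = T^[k] (T^[k'-k] ξ') := by
        rw [← Function.iterate_add_apply]
        have h : k + (k' - k) = k' := by omega
        rw [h, hks, hk's]
      have hξ'I : T^[k'-k] ξ' ∈ Ico (0:ℝ) 1 := (hmaps.iterate _) (hsub hξ')
      have hx := injOn_iter hmaps hinj k (hsub hξ) hξ'I heq
      rcases Nat.eq_zero_or_pos (k' - k) with h0 | h1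
      · have h : k = k' := by omega
        subst h
        rw [h0] at hx
        simpa using hx
      · exfalso
        apply hav (k'-k) h1 (by omega)
        rw [← hx]
        exact hξ
    intro s ξ hξ ξ' hξ'
    obtain ⟨hξm, k, hk1, hks, hkav⟩ := hξ
    obtain ⟨hξ'm, k', hk'1, hk's, hk'av⟩ := hξ'
    rcases le_total k k' with h | h
    · exact key s k k' ξ ξ' hξm hξ'm hk1 hk'1 h hks hk's hk'av
    · exact (key s k' k ξ' ξ hξ'm hξm hk'1 hk1 h hk's hks hkav).symm
  have hBfin : ∀ s, (B s).Finite := fun s => (hBsub s).finite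
  have hBmem : ∀ s, B s ⊆ Set.Ico a b := fun s ξ hξ => hξ.1
  set g : ℝ → ℝ := fun s => if h : (B s).Nonempty then h.some else 0 with hgdef
  have hgmem : ∀ s ξ, ξ ∈ B s → ξ = g s := by
    intro s ξ hξ
    have hne : (B s).Nonempty := ⟨ξ, hξ⟩
    have h1 : g s = hne.some := by rw [hgdef]; exact dif_pos hne
    rw [h1]
    exact hBsub s hξ hne.some_mem
  set Y : Set ℝ := {s | (s ∈ D ∧ s ∉ Set.Ico a b) ∧ (B s).Nonempty} with hYdef
  have hYfin : Y.Finite := hfin.subset (fun s hs => hs.1.1)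
  set C₀ : Set ℝ := (D ∩ Ioo a b) ∪ (g '' Y ∪ (B a ∪ B b)) with hC₀def
  have hC₀fin : C₀.Finite :=
    ((hfin.inter_of_left _).union ((hYfin.image g).union ((hBfin a).union (hBfin b))))
  have hC₀card : C₀.ncard ≤ N + 1 := by
    have h1 : (B a).ncard ≤ 1 := by
      rcases (hBsub a).eq_empty_or_singleton with h | ⟨x, h⟩ <;> simp [h]
    have h2 : (B b).ncard ≤ 1 := by
      rcases (hBsub b).eq_empty_or_singleton with h | ⟨x, h⟩ <;> simp [h]
    have h3 : (g '' Y).ncard ≤ Y.ncard := Set.ncard_image_le hYfin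
    have hdisj : Disjoint (D ∩ Ioo a b) Y := by
      rw [Set.disjoint_left]
      rintro x ⟨_, hx2⟩ ⟨⟨_, hx4⟩, _⟩
      exact hx4 ⟨le_of_lt hx2.1, hx2.2⟩
    have h4 : (D ∩ Ioo a b).ncard + Y.ncard = ((D ∩ Ioo a b) ∪ Y).ncard :=
      (Set.ncard_union_eq hdisj (hfin.inter_of_left _) hYfin).symm
    have h5 : ((D ∩ Ioo a b) ∪ Y).ncard ≤ D.ncard :=
      Set.ncard_le_ncard (Set.union_subset Set.inter_subset_left (fun s hs => hs.1.1)) hfin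
    have h6 : C₀.ncard ≤ (D ∩ Ioo a b).ncard + ((g '' Y).ncard + ((B a).ncard + (B b).ncard)) := by
      refine le_trans (Set.ncard_union_le _ _) ?_
      gcongr
      refine le_trans (Set.ncard_union_le _ _) ?_
      gcongr
      exact Set.ncard_union_le _ _
    omega
  -- bounds on C₀
  have hC₀bd : ∀ y ∈ C₀, a ≤ y ∧ y < b := by
    intro y hy
    rcases hy with ⟨_, h⟩ | ⟨s, hs, hgs⟩ | h | h
    · exact ⟨le_of_lt h.1, h.2⟩
    · obtain ⟨ξ, hξ⟩ := hs.2
      have hh := hgmem s ξ hξ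
      rw [← hgs, ← hh]
      exact ⟨(hBmem s hξ).1, (hBmem s hξ).2⟩
    · exact ⟨(hBmem a h).1, (hBmem a h).2⟩
    · exact ⟨(hBmem b h).1, (hBmem b h).2⟩
  -- the finite set of cut points together with the endpoints
  set F : Finset ℝ := insert a (insert b hC₀fin.toFinset) with hFdef
  have hmemF : ∀ y, y ∈ F ↔ y = a ∨ y = b ∨ y ∈ C₀ := by
    intro y
    simp [hFdef, Set.Finite.mem_toFinset]
  have haF : a ∈ F := (hmemF a).2 (Or.inl rfl)
  have hbF : b ∈ F := (hmemF b).2 (Or.inr (Or.inl rfl))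
  have hC₀F : ∀ y ∈ C₀, y ∈ F := fun y hy => (hmemF y).2 (Or.inr (Or.inr hy))
  have hFmin : ∀ y ∈ F, a ≤ y := by
    intro y hy
    rcases (hmemF y).1 hy with h | h | h
    · exact h.ge
    · exact h ▸ hab.le
    · exact (hC₀bd y h).1
  have hFmax : ∀ y ∈ F, y ≤ b := by
    intro y hy
    rcases (hmemF y).1 hy with h | h | h
    · exact h ▸ hab.le
    · exact h.le
    · exact (hC₀bd y h).2.le
  have hcardF : 1 < F.card := Finset.one_lt_card.2 ⟨a, haF, b, hbF, ne_of_lt hab⟩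
  set e := F.orderIsoOfFin (rfl : F.card = F.card) with hedef
  set p : ℕ → ℝ := fun i => if h : i < F.card then (e ⟨i, h⟩ : ℝ) else 0 with hpdef
  set N' := F.card - 1 with hN'def
  have hN'1 : 1 ≤ N' := by omega
  have hpval : ∀ i (h : i < F.card), p i = (e ⟨i, h⟩ : ℝ) := by
    intro i h
    rw [hpdef]
    exact dif_pos h
  have hpF : ∀ i, i < F.card → p i ∈ F := by
    intro i h
    rw [hpval i h]
    exact (e ⟨i, h⟩).2
  have hpmono : ∀ i < N', p i < p (i+1) := by
    intro i hi
    rw [hpval i (by omega), hpval (i+1) (by omega)]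
    exact Subtype.coe_lt_coe.2 (e.lt_iff_lt.2 (by exact Fin.mk_lt_mk.2 (by omega)))
  have hsurjF : ∀ y ∈ F, ∃ i, ∃ h : i < F.card, p i = y := by
    intro y hy
    obtain ⟨j, hj⟩ := e.surjective ⟨y, hy⟩
    exact ⟨j.1, j.2, by rw [hpval j.1 j.2]; simp [Fin.eta, hj]⟩
  have hp0 : p 0 = a := by
    obtain ⟨j, hj, hpj⟩ := hsurjF a haF
    have h0 : (0:ℕ) < F.card := by omega
    have h1 : p 0 ≤ a := by
      rw [hpval 0 h0, ← hpj, hpval j hj]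
      exact Subtype.coe_le_coe.2 (e.monotone (Fin.mk_le_mk.2 (Nat.zero_le j)))
    exact le_antisymm h1 (hFmin _ (hpF 0 h0))
  have hpN' : p N' = b := by
    obtain ⟨j, hj, hpj⟩ := hsurjF b hbF
    have h0 : N' < F.card := by omega
    have h1 : b ≤ p N' := by
      rw [← hpj, hpval j hj, hpval N' h0]
      exact Subtype.coe_le_coe.2 (e.monotone (Fin.mk_le_mk.2 (by omega)))
    exact le_antisymm (hFmax _ (hpF N' h0)) h1
  have hpa : ∀ i, i ≤ N' → a ≤ p i := by
    intro i hi
    rw [← hp0]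
    exact chain_le p N' hpmono 0 i (Nat.zero_le i) hi
  have hpb : ∀ i, i ≤ N' → p i ≤ b := by
    intro i hi
    rw [← hpN']
    exact chain_le p N' hpmono i N' hi le_rfl
  -- cut-set properties needed by `component`
  have hXc : ∀ d ∈ Discont T 0 1, d ∈ Ioo a b → d ∈ C₀ := fun d h1 h2 => Or.inl ⟨h1, h2⟩
  have hBc : ∀ s ξ, (s ∈ Discont T 0 1 ∧ s ∉ Set.Ico a b) ∨ s = a ∨ s = b →
      ξ ∈ Set.Ico a b → ∀ k, 1 ≤ k → T^[k] ξ = s →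
      (∀ j, 1 ≤ j → j < k → T^[j] ξ ∉ Set.Ico a b) → ξ ∈ C₀ := by
    intro s ξ hs hξ k hk1 hks hav
    have hξB : ξ ∈ B s := ⟨hξ, k, hk1, hks, hav⟩
    rcases hs with ⟨h1, h2⟩ | h | h
    · exact Or.inr (Or.inl ⟨s, ⟨⟨h1, h2⟩, ⟨ξ, hξB⟩⟩, (hgmem s ξ hξB).symm⟩)
    · subst h; exact Or.inr (Or.inr (Or.inl hξB))
    · subst h; exact Or.inr (Or.inr (Or.inr hξB))
  have hfree : ∀ i, i < N' → ∀ y ∈ C₀, y ∉ Ioo (p i) (p (i+1)) := by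
    intro i hi y hy hmem
    obtain ⟨j, hj, hpj⟩ := hsurjF y (hC₀F y hy)
    have h1 : p i < p j := by rw [hpj]; exact hmem.1
    have h2 : p j < p (i+1) := by rw [hpj]; exact hmem.2
    have hij : i < j := by
      by_contra hc
      push_neg at hc
      have := chain_le p N' hpmono j i hc (by omega)
      linarith
    have hij2 : j < i+1 := by
      by_contra hc
      push_neg at hc
      have := chain_le p N' hpmono (i+1) j hc (by omega)
      linarith
    omega
  -- apply the component lemma on each piece
  have hcomp : ∀ i, i < N' → ∃ n, 1 ≤ n ∧ ∀ x ∈ Set.Ico (p i) (p (i+1)),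
      (∀ j, 1 ≤ j → j < n → T^[j] x ∉ Set.Ico a b) ∧
      T^[n] x = x + (T^[n] (p i) - p i) ∧ T^[n] x ∈ Set.Ico a b := fun i hi =>
    component T a b C₀ hsub hmaps hinj htrans hXc hBc (p i) (p (i+1))
      (hpa i (by omega)) (hpmono i hi) (hpb (i+1) (by omega)) (hfree i hi)
  -- return time and return map on each piece
  have hret : ∀ i, i < N' → ∀ x ∈ Set.Ico (p i) (p (i+1)),
      retMap T (Set.Ico a b) x = x + (retMap T (Set.Ico a b) (p i) - p i) ∧
      retMap T (Set.Ico a b) x ∈ Set.Ico a b ∧ 1 ≤ retTime T (Set.Ico a b) x := by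
    intro i hi x hx
    obtain ⟨n, hn1, hprop⟩ := hcomp i hi
    have hpi : p i ∈ Set.Ico (p i) (p (i+1)) := ⟨le_refl _, hpmono i hi⟩
    have hx' := hprop x hx
    have hp' := hprop (p i) hpi
    have hrt : ∀ z ∈ Set.Ico (p i) (p (i+1)), retTime T (Set.Ico a b) z = n := by
      intro z hz
      have hz' := hprop z hz
      have hdef : retTime T (Set.Ico a b) z = sInf {m : ℕ | 1 ≤ m ∧ T^[m] z ∈ Set.Ico a b} := rfl
      rw [hdef]
      apply le_antisymm
      · exact Nat.sInf_le (show n ∈ {m : ℕ | 1 ≤ m ∧ T^[m] z ∈ Set.Ico a b} from ⟨hn1, hz'.2.2⟩)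
      · apply le_csInf (Set.nonempty_of_mem (show n ∈ {m : ℕ | 1 ≤ m ∧ T^[m] z ∈ Set.Ico a b} from ⟨hn1, hz'.2.2⟩))
        intro m hm
        by_contra hc
        push_neg at hc
        exact hz'.1 m hm.1 hc hm.2
    constructor
    · show T^[retTime T (Set.Ico a b) x] x = x + (T^[retTime T (Set.Ico a b) (p i)] (p i) - p i)
      rw [hrt x hx, hrt (p i) hpi]
      exact hx'.2.1
    constructor
    · show T^[retTime T (Set.Ico a b) x] x ∈ Set.Ico a b
      rw [hrt x hx]
      exact hx'.2.2
    · rw [hrt x hx]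
      exact hn1
  have hpieceΔ : ∀ i, i < N' → Set.Ico (p i) (p (i+1)) ⊆ Set.Ico a b := by
    intro i hi z hz
    exact ⟨le_trans (hpa i (by omega)) hz.1, lt_of_lt_of_le hz.2 (hpb (i+1) (by omega))⟩
  have hglob : ∀ x ∈ Set.Ico a b, ∃ i, i < N' ∧ x ∈ Set.Ico (p i) (p (i+1)) := by
    intro x hx
    obtain ⟨i, hi, h1, h2⟩ := exists_piece p N' hpmono x (by rw [hp0]; exact hx.1)
      (by rw [hpN']; exact hx.2)
    exact ⟨i, hi, h1, h2⟩
  have hmapsR : MapsTo (retMap T (Set.Ico a b)) (Set.Ico a b) (Set.Ico a b) := by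
    intro x hx
    obtain ⟨i, hi, hxi⟩ := hglob x hx
    exact (hret i hi x hxi).2.1
  have hpos : ∀ x ∈ Set.Ico a b, 1 ≤ retTime T (Set.Ico a b) x := by
    intro x hx
    obtain ⟨i, hi, hxi⟩ := hglob x hx
    exact (hret i hi x hxi).2.2
  -- injectivity
  have hinjR : InjOn (retMap T (Set.Ico a b)) (Set.Ico a b) := by
    have key : ∀ x y, x ∈ Set.Ico a b → y ∈ Set.Ico a b →
        retTime T (Set.Ico a b) x ≤ retTime T (Set.Ico a b) y →
        retMap T (Set.Ico a b) x = retMap T (Set.Ico a b) y → x = y := by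
      intro x y hx hy hle heq
      set m := retTime T (Set.Ico a b) x with hmdef
      set m' := retTime T (Set.Ico a b) y with hm'def
      have heq' : T^[m] x = T^[m] (T^[m'-m] y) := by
        rw [← Function.iterate_add_apply]
        have h : m + (m' - m) = m' := by omega
        rw [h]
        exact heq
      have hxy := injOn_iter hmaps hinj m (hsub hx) ((hmaps.iterate _) (hsub hy)) heq'
      rcases Nat.eq_zero_or_pos (m' - m) with h0 | h1
      · rw [h0] at hxy
        simpa using hxy
      · exfalso
        have hm1 : 1 ≤ m := hpos x hx
        have hlt : m' - m < sInf {n : ℕ | 1 ≤ n ∧ T^[n] y ∈ Set.Ico a b} := by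
          have hdef : retTime T (Set.Ico a b) y = sInf {n : ℕ | 1 ≤ n ∧ T^[n] y ∈ Set.Ico a b} := rfl
          rw [← hdef]
          omega
        have hnm := Nat.notMem_of_lt_sInf hlt
        apply hnm
        refine ⟨h1, ?_⟩
        rw [← hxy]
        exact hx
    intro x hx y hy heq
    rcases le_total (retTime T (Set.Ico a b) x) (retTime T (Set.Ico a b) y) with h | h
    · exact key x y hx hy h heq
    · exact (key y x hy hx h heq.symm).symm
  -- surjectivity via a measure argument
  have hAim : ∀ i, i < N' → ∀ z ∈ Set.Ico (p i + (retMap T (Set.Ico a b) (p i) - p i))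
      (p (i+1) + (retMap T (Set.Ico a b) (p i) - p i)),
      ∃ x ∈ Set.Ico (p i) (p (i+1)), retMap T (Set.Ico a b) x = z := by
    intro i hi z hz
    have hx : z - (retMap T (Set.Ico a b) (p i) - p i) ∈ Set.Ico (p i) (p (i+1)) :=
      ⟨by linarith [hz.1], by linarith [hz.2]⟩
    refine ⟨_, hx, ?_⟩
    rw [(hret i hi _ hx).1]
    ring
  have hAmem : ∀ i, i < N' → ∀ x ∈ Set.Ico (p i) (p (i+1)),
      retMap T (Set.Ico a b) x ∈ Set.Ico (p i + (retMap T (Set.Ico a b) (p i) - p i))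
        (p (i+1) + (retMap T (Set.Ico a b) (p i) - p i)) := by
    intro i hi x hx
    rw [(hret i hi x hx).1]
    exact ⟨by linarith [hx.1], by linarith [hx.2]⟩
  have hAsub : ∀ i, i < N' → Set.Ico (p i + (retMap T (Set.Ico a b) (p i) - p i))
      (p (i+1) + (retMap T (Set.Ico a b) (p i) - p i)) ⊆ Set.Ico a b := by
    intro i hi z hz
    obtain ⟨x, hx, hxz⟩ := hAim i hi z hz
    rw [← hxz]
    exact (hret i hi x hx).2.1
  have hAdisj : (↑(Finset.range N') : Set ℕ).PairwiseDisjoint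
      (fun i => Set.Ico (p i + (retMap T (Set.Ico a b) (p i) - p i))
        (p (i+1) + (retMap T (Set.Ico a b) (p i) - p i))) := by
    have hkey : ∀ i j : ℕ, i < j → j < N' → Disjoint
        (Set.Ico (p i + (retMap T (Set.Ico a b) (p i) - p i))
          (p (i+1) + (retMap T (Set.Ico a b) (p i) - p i)))
        (Set.Ico (p j + (retMap T (Set.Ico a b) (p j) - p j))
          (p (j+1) + (retMap T (Set.Ico a b) (p j) - p j))) := by
      intro i j hij hj
      rw [Set.disjoint_left]
      intro z hzi hzj
      obtain ⟨x, hx, hxz⟩ := hAim i (by omega) z hzi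
      obtain ⟨y, hy, hyz⟩ := hAim j hj z hzj
      have hxy : x = y := hinjR (hpieceΔ i (by omega) hx) (hpieceΔ j hj hy) (by rw [hxz, hyz])
      have h1 : p (i+1) ≤ p j := chain_le p N' hpmono (i+1) j (by omega) (by omega)
      rw [hxy] at hx
      linarith [hx.2, hy.1]
    intro i hi j hj hij
    simp only [Finset.coe_range, Set.mem_Iio] at hi hj
    rcases lt_or_gt_of_ne hij with h | h
    · exact hkey i j h hj
    · exact (hkey j i h hi).symm
  have hvolU : MeasureTheory.volume (⋃ i ∈ Finset.range N',
      Set.Ico (p i + (retMap T (Set.Ico a b) (p i) - p i))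
        (p (i+1) + (retMap T (Set.Ico a b) (p i) - p i))) = ENNReal.ofReal (b - a) := by
    rw [MeasureTheory.measure_biUnion_finset hAdisj (fun _ _ => measurableSet_Ico)]
    have h1 : ∀ i ∈ Finset.range N', MeasureTheory.volume
        (Set.Ico (p i + (retMap T (Set.Ico a b) (p i) - p i))
          (p (i+1) + (retMap T (Set.Ico a b) (p i) - p i))) = ENNReal.ofReal (p (i+1) - p i) := by
      intro i _
      rw [Real.volume_Ico]
      ring_nf
    rw [Finset.sum_congr rfl h1]
    rw [← ENNReal.ofReal_sum_of_nonneg (fun i hi => by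
      have := hpmono i (Finset.mem_range.1 hi); linarith)]
    congr 1
    rw [Finset.sum_range_sub (fun i => p i) N', hp0, hpN']
  have hcover : Set.Ico a b ⊆ ⋃ i ∈ Finset.range N',
      Set.Ico (p i + (retMap T (Set.Ico a b) (p i) - p i))
        (p (i+1) + (retMap T (Set.Ico a b) (p i) - p i)) := by
    by_contra hc
    rw [Set.not_subset] at hc
    obtain ⟨y, hy, hyn⟩ := hc
    set G := (Finset.range N').filter
      (fun i => y < p i + (retMap T (Set.Ico a b) (p i) - p i)) with hGdef
    set E : Finset ℝ := insert (b - y)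
      (G.image (fun i => p i + (retMap T (Set.Ico a b) (p i) - p i) - y)) with hEdef
    have hEne : E.Nonempty := ⟨b - y, Finset.mem_insert_self _ _⟩
    set ε := E.min' hEne with hεdef
    have hε1 : ε ≤ b - y := Finset.min'_le E _ (Finset.mem_insert_self _ _)
    have hε2 : ∀ i ∈ G, ε ≤ p i + (retMap T (Set.Ico a b) (p i) - p i) - y := by
      intro i hi
      exact Finset.min'_le E _ (Finset.mem_insert_of_mem (Finset.mem_image_of_mem _ hi))
    have hεpos : 0 < ε := by
      rw [hεdef, Finset.lt_min'_iff]
      intro z hz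
      rw [hEdef] at hz
      rcases Finset.mem_insert.1 hz with h | h
      · rw [h]; linarith [hy.2]
      · obtain ⟨i, hiG, hiz⟩ := Finset.mem_image.1 h
        have := (Finset.mem_filter.1 hiG).2
        rw [← hiz]
        linarith
    have hIsub : Set.Ico y (y + ε) ⊆ Set.Ico a b \ ⋃ i ∈ Finset.range N',
        Set.Ico (p i + (retMap T (Set.Ico a b) (p i) - p i))
          (p (i+1) + (retMap T (Set.Ico a b) (p i) - p i)) := by
      intro z hz
      refine ⟨⟨le_trans hy.1 hz.1, by linarith [hz.2]⟩, ?_⟩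
      intro hmem
      simp only [Set.mem_iUnion] at hmem
      obtain ⟨i, hiR, hzi⟩ := hmem
      by_cases hyi : y < p i + (retMap T (Set.Ico a b) (p i) - p i)
      · have := hε2 i (Finset.mem_filter.2 ⟨hiR, hyi⟩)
        have := hzi.1
        linarith [hz.2]
      · push_neg at hyi
        have hyA : y ∉ Set.Ico (p i + (retMap T (Set.Ico a b) (p i) - p i))
            (p (i+1) + (retMap T (Set.Ico a b) (p i) - p i)) := by
          intro h
          apply hyn
          simp only [Set.mem_iUnion]
          exact ⟨i, hiR, h⟩
        have h2 : p (i+1) + (retMap T (Set.Ico a b) (p i) - p i) ≤ y := by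
          by_contra h3
          push_neg at h3
          exact hyA ⟨hyi, h3⟩
        have := hzi.2
        linarith [hz.1]
    have hUsub : (⋃ i ∈ Finset.range N',
        Set.Ico (p i + (retMap T (Set.Ico a b) (p i) - p i))
          (p (i+1) + (retMap T (Set.Ico a b) (p i) - p i))) ⊆ Set.Ico a b :=
      Set.iUnion₂_subset (fun i hi => hAsub i (Finset.mem_range.1 hi))
    have hUmeas : MeasurableSet (⋃ i ∈ Finset.range N',
        Set.Ico (p i + (retMap T (Set.Ico a b) (p i) - p i))
          (p (i+1) + (retMap T (Set.Ico a b) (p i) - p i))) :=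
      MeasurableSet.biUnion (Finset.range N').countable_toSet (fun i _ => measurableSet_Ico)
    have hUfin : MeasureTheory.volume (⋃ i ∈ Finset.range N',
        Set.Ico (p i + (retMap T (Set.Ico a b) (p i) - p i))
          (p (i+1) + (retMap T (Set.Ico a b) (p i) - p i))) ≠ ⊤ := by
      rw [hvolU]; exact ENNReal.ofReal_ne_top
    have hdiff : MeasureTheory.volume (Set.Ico a b \ ⋃ i ∈ Finset.range N',
        Set.Ico (p i + (retMap T (Set.Ico a b) (p i) - p i))
          (p (i+1) + (retMap T (Set.Ico a b) (p i) - p i))) = 0 := by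
      rw [MeasureTheory.measure_diff hUsub hUmeas.nullMeasurableSet hUfin, hvolU,
        Real.volume_Ico]
      simp
    have hge := MeasureTheory.measure_mono (μ := MeasureTheory.volume) hIsub
    rw [hdiff, Real.volume_Ico] at hge
    have : y + ε - y = ε := by ring
    rw [this] at hge
    have := ENNReal.ofReal_eq_zero.1 (le_antisymm hge zero_le)
    linarith
  have hsurjR : SurjOn (retMap T (Set.Ico a b)) (Set.Ico a b) (Set.Ico a b) := by
    intro z hz
    have := hcover hz
    simp only [Set.mem_iUnion] at this
    obtain ⟨i, hiR, hzi⟩ := this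
    obtain ⟨x, hx, hxz⟩ := hAim i (Finset.mem_range.1 hiR) z hzi
    exact ⟨x, hpieceΔ i (Finset.mem_range.1 hiR) hx, hxz⟩
  -- assemble IsIETOn
  refine ⟨⟨N', p, fun i => retMap T (Set.Ico a b) (p i) - p i, hN'1, hp0, hpN', hpmono,
    fun i hi x hx => (hret i hi x hx).1, hmapsR, hinjR, hsurjR⟩, ?_, ?_⟩
  -- discontinuities
  all_goals {
    have hdsub : Discont (retMap T (Set.Ico a b)) a b ⊆ C₀ := by
      intro x hx
      obtain ⟨hxm, hxnc⟩ := hx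
      by_contra hxC
      apply hxnc
      obtain ⟨i, hi, hxi⟩ := hglob x hxm
      rcases eq_or_lt_of_le hxi.1 with heq | hlt
      · rcases Nat.eq_zero_or_pos i with h0 | hipos
        · subst h0
          have hmem : Set.Ico a b ∩ Iio (p 1) ∈ 𝓝[Set.Ico a b] x :=
            inter_mem self_mem_nhdsWithin (mem_nhdsWithin_of_mem_nhds (Iio_mem_nhds hxi.2))
          refine ContinuousWithinAt.congr_of_eventuallyEq
            ((continuous_id.add continuous_const).continuousWithinAt :
              ContinuousWithinAt (fun y => y + (retMap T (Set.Ico a b) (p 0) - p 0))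
                (Set.Ico a b) x) ?_ ?_
          · filter_upwards [hmem] with y hy
            exact (hret 0 hi y ⟨by rw [hp0]; exact hy.1.1, hy.2⟩).1
          · exact (hret 0 hi x hxi).1
        · exfalso
          apply hxC
          have hxF : p i ∈ F := hpF i (by omega)
          rcases (hmemF (p i)).1 hxF with h | h | h
          · have hlt0 := chain_lt p N' hpmono 0 i hipos (by omega)
            rw [hp0, h] at hlt0
            exact absurd hlt0 (lt_irrefl a)
          · have hxb : x = b := by rw [← heq, h]
            linarith [hxm.2]
          · rw [← heq]
            exact h
      · have hmem : Ioo (p i) (p (i+1)) ∈ 𝓝[Set.Ico a b] x :=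
          mem_nhdsWithin_of_mem_nhds (Ioo_mem_nhds hlt hxi.2)
        refine ContinuousWithinAt.congr_of_eventuallyEq
          ((continuous_id.add continuous_const).continuousWithinAt :
            ContinuousWithinAt (fun y => y + (retMap T (Set.Ico a b) (p i) - p i))
              (Set.Ico a b) x) ?_ ?_
        · filter_upwards [hmem] with y hy
          exact (hret i hi y ⟨hy.1.le, hy.2⟩).1
        · exact (hret i hi x hxi).1
    first
    | exact hC₀fin.subset hdsub
    | exact le_trans (Set.ncard_le_ncard hdsub hC₀fin) hC₀card
  }
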